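/- Let R be a commutative ring. The map c : (R² ⋊ SL₂(R)) × (R² ⋊ SL₂(R)) → R defined by c((a,g),(b,h)) = det[a, g·b] (the 2×2 determinant of the column vectors a and g·b) is a 2-cocycle, where the action of the semidirect product on R is trivial. -/
import Mathlib


/-- For a commutative ring `R`, the map `c((a,g),(b,h)) = det[a, g·b]` on the semidirect
product `R² ⋊ SL₂(R)` is a 2-cocycle (trivial coefficients in `R`). -/
theorem stmt8 {R : Type*} [CommRing R]
    (c : ((Fin 2 → R) × Matrix.SpecialLinearGroup (Fin 2) R) →
         ((Fin 2 → R) × Matrix.SpecialLinearGroup (Fin 2) R) → R)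
    (hc : ∀ x y, c x y =
      x.1 0 * ((x.2 : Matrix (Fin 2) (Fin 2) R).mulVec y.1) 1
        - x.1 1 * ((x.2 : Matrix (Fin 2) (Fin 2) R).mulVec y.1) 0)
    (mul : ((Fin 2 → R) × Matrix.SpecialLinearGroup (Fin 2) R) →
           ((Fin 2 → R) × Matrix.SpecialLinearGroup (Fin 2) R) →
           ((Fin 2 → R) × Matrix.SpecialLinearGroup (Fin 2) R))
    (hmul : ∀ x y, mul x y =
      (x.1 + (x.2 : Matrix (Fin 2) (Fin 2) R).mulVec y.1, x.2 * y.2)) :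
    ∀ x y z, c x y + c (mul x y) z = c x (mul y z) + c y z := by
  intro x y z
  have hdet : ((x.2 : Matrix (Fin 2) (Fin 2) R)).det = 1 := x.2.2
  rw [Matrix.det_fin_two] at hdet
  simp only [hc, hmul, Matrix.SpecialLinearGroup.coe_mul, Matrix.mulVec, Matrix.mul_apply,
    Pi.add_apply, Fin.sum_univ_two, dotProduct]
  linear_combination (y.1 0 * ((y.2 : Matrix (Fin 2) (Fin 2) R) 1 0 * z.1 0 +
      (y.2 : Matrix (Fin 2) (Fin 2) R) 1 1 * z.1 1) -
    y.1 1 * ((y.2 : Matrix (Fin 2) (Fin 2) R) 0 0 * z.1 0 +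
      (y.2 : Matrix (Fin 2) (Fin 2) R) 0 1 * z.1 1)) * hdet
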